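/- Let K ≥ 2 be an integer, let ν ≥ 0, and let λ ∈ ℝ^K with λ_k ≥ 0 for every k. Then inf{ Σ_{k=1}^K λ_k·γ_k^{−ν} : γ ∈ relint(Δ^K) } = ( Σ_{k=1}^K λ_k^{1/(ν+1)} )^{ν+1}. -/

import Mathlib

open Finset Real
open Filter Topology

/-- The α-Tsallis entropy on the positive orthant (Shannon for α = 1, Burg for α = 0). -/
noncomputable def tsallis (α : ℝ) {K : ℕ} (p : Fin K → ℝ) : ℝ :=
  if α = 0 then ∑ k, Real.log (p k)
  else if α = 1 then -∑ k, p k * Real.log (p k)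
  else (∑ k, p k ^ α) / (α * (1 - α))

/-- The gradient of the α-Tsallis entropy on the positive orthant. -/
noncomputable def tsallisGrad (α : ℝ) {K : ℕ} (q : Fin K → ℝ) (k : Fin K) : ℝ :=
  if α = 0 then 1 / q k
  else if α = 1 then -(1 + Real.log (q k))
  else -(q k ^ (α - 1)) / (α - 1)

/-- The Bregman divergence D_α of the negative α-Tsallis entropy:
`D_α(p‖q) = -S_α(p) + S_α(q) + ⟨∇S_α(q), p - q⟩`. -/
noncomputable def breg (α : ℝ) {K : ℕ} (p q : Fin K → ℝ) : ℝ :=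
  -tsallis α p + tsallis α q + ∑ k, tsallisGrad α q k * (p k - q k)

/-- The relative interior of the probability simplex Δ^K. -/
def relintSimplex (K : ℕ) : Set (Fin K → ℝ) :=
  {p | (∀ k, 0 < p k ∧ p k < 1) ∧ ∑ k, p k = 1}

/-- The ℓ¹ norm on ℝ^K. -/
noncomputable def l1 {K : ℕ} (x : Fin K → ℝ) : ℝ := ∑ k, |x k|

lemma holder_lower {K : ℕ} (ν : ℝ) (hν : 0 < ν) (lam : Fin K → ℝ) (hlam : ∀ k, 0 ≤ lam k)
    (γ : Fin K → ℝ) (hγpos : ∀ k, 0 < γ k) (hγsum : ∑ k, γ k = 1) :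
    (∑ k, (lam k) ^ (1 / (ν + 1))) ^ (ν + 1) ≤ ∑ k, lam k * (γ k) ^ (-ν) := by
  have hν1 : (0:ℝ) < ν + 1 := by linarith
  have hpq : Real.HolderConjugate (ν+1) ((ν+1)/ν) :=
    Real.holderConjugate_iff.mpr ⟨by linarith, by field_simp; ring⟩
  set f : Fin K → ℝ := fun k => (lam k * γ k ^ (-ν)) ^ (1/(ν+1)) with hf
  set g : Fin K → ℝ := fun k => γ k ^ (ν/(ν+1)) with hg
  have hfnn : ∀ k, 0 ≤ f k := fun k =>
    Real.rpow_nonneg (mul_nonneg (hlam k) (Real.rpow_nonneg (hγpos k).le _)) _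
  have hgnn : ∀ k, 0 ≤ g k := fun k => Real.rpow_nonneg (hγpos k).le _
  have key := Real.inner_le_Lp_mul_Lq Finset.univ f g hpq
  have h1 : ∀ k ∈ Finset.univ, f k * g k = lam k ^ (1/(ν+1)) := by
    intro k _
    rw [hf, hg]
    simp only
    rw [Real.mul_rpow (hlam k) (Real.rpow_nonneg (hγpos k).le _), mul_assoc,
      ← Real.rpow_mul (hγpos k).le, ← Real.rpow_add (hγpos k)]
    have : -ν * (1/(ν+1)) + ν/(ν+1) = 0 := by field_simp; ring
    rw [this, Real.rpow_zero, mul_one]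
  have h2 : ∀ k ∈ Finset.univ, |f k| ^ (ν+1) = lam k * γ k ^ (-ν) := by
    intro k _
    rw [abs_of_nonneg (hfnn k), hf]
    simp only
    rw [← Real.rpow_mul (mul_nonneg (hlam k) (Real.rpow_nonneg (hγpos k).le _)),
      one_div_mul_cancel hν1.ne', Real.rpow_one]
  have h3 : ∀ k ∈ Finset.univ, |g k| ^ ((ν+1)/ν) = γ k := by
    intro k _
    rw [abs_of_nonneg (hgnn k), hg]
    simp only
    rw [← Real.rpow_mul (hγpos k).le]
    have : ν/(ν+1) * ((ν+1)/ν) = 1 := by field_simp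
    rw [this, Real.rpow_one]
  rw [Finset.sum_congr rfl h1, Finset.sum_congr rfl h2, Finset.sum_congr rfl h3, hγsum,
    Real.one_rpow, mul_one] at key
  have hA : 0 ≤ ∑ k, lam k * γ k ^ (-ν) :=
    Finset.sum_nonneg fun k _ => mul_nonneg (hlam k) (Real.rpow_nonneg (hγpos k).le _)
  calc (∑ k, lam k ^ (1/(ν+1)))^(ν+1)
      ≤ ((∑ k, lam k * γ k ^ (-ν))^(1/(ν+1)))^(ν+1) :=
        Real.rpow_le_rpow (Finset.sum_nonneg fun k _ => Real.rpow_nonneg (hlam k) _) key hν1.le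
    _ = ∑ k, lam k * γ k ^ (-ν) := by
        rw [← Real.rpow_mul hA, one_div_mul_cancel hν1.ne', Real.rpow_one]

lemma mem_relint_of {K : ℕ} (hK : 2 ≤ K) (s : Fin K → ℝ) (hs : ∀ k, 0 ≤ s k) {t : ℝ}
    (ht : 0 < t) : (fun k => (s k + t) / (∑ j, s j + K * t)) ∈ relintSimplex K := by
  have hK1 : (1:ℝ) < K := by exact_mod_cast Nat.lt_of_lt_of_le Nat.one_lt_two hK
  have hsum : 0 ≤ ∑ j, s j := Finset.sum_nonneg fun j _ => hs j
  have hden : 0 < ∑ j, s j + K * t := by nlinarith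
  have htot : ∑ k : Fin K, (s k + t) = ∑ j, s j + K * t := by
    rw [Finset.sum_add_distrib, Finset.sum_const, Finset.card_univ, Fintype.card_fin,
      nsmul_eq_mul]
  refine ⟨fun k => ⟨div_pos (by linarith [hs k]) hden, ?_⟩, ?_⟩
  · rw [div_lt_one hden]
    have hk : s k ≤ ∑ j, s j := Finset.single_le_sum (fun j _ => hs j) (Finset.mem_univ k)
    nlinarith
  · rw [← Finset.sum_div, htot, div_self hden.ne']

theorem inf_over_relint_simplex (K : ℕ) (hK : 2 ≤ K) (ν : ℝ) (hν : 0 ≤ ν)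
    (lam : Fin K → ℝ) (hlam : ∀ k, 0 ≤ lam k) :
    sInf {r : ℝ | ∃ γ ∈ relintSimplex K, r = ∑ k, lam k * (γ k) ^ (-ν)} =
      (∑ k, (lam k) ^ (1 / (ν + 1))) ^ (ν + 1) := by
  have hγ0 : (fun _ : Fin K => ((0:ℝ) + 1) / (∑ _j : Fin K, (0:ℝ) + K * 1)) ∈ relintSimplex K :=
    mem_relint_of hK (fun _ => 0) (fun _ => le_refl 0) one_pos
  have hne : {r : ℝ | ∃ γ ∈ relintSimplex K, r = ∑ k, lam k * (γ k) ^ (-ν)}.Nonempty :=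
    ⟨_, _, hγ0, rfl⟩
  rcases eq_or_lt_of_le hν with h0 | hνpos
  · -- ν = 0
    subst h0
    have hset : {r : ℝ | ∃ γ ∈ relintSimplex K, r = ∑ k, lam k * (γ k) ^ (-(0:ℝ))} =
        {∑ k, lam k} := by
      ext r
      simp only [Set.mem_setOf_eq, Set.mem_singleton_iff]
      constructor
      · rintro ⟨γ, hγ, rfl⟩
        simp
      · rintro rfl
        exact ⟨_, hγ0, by simp⟩
    rw [hset, csInf_singleton]
    norm_num
  · -- ν > 0
    have hν1 : (0:ℝ) < ν + 1 := by linarith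
    set s : Fin K → ℝ := fun k => lam k ^ (1/(ν+1)) with hsdef
    set S : ℝ := ∑ k, s k with hSdef
    have hsnn : ∀ k, 0 ≤ s k := fun k => Real.rpow_nonneg (hlam k) _
    have hSnn : 0 ≤ S := Finset.sum_nonneg fun k _ => hsnn k
    have hbdd : BddBelow {r : ℝ | ∃ γ ∈ relintSimplex K, r = ∑ k, lam k * (γ k) ^ (-ν)} := by
      refine ⟨S ^ (ν+1), ?_⟩
      rintro r ⟨γ, hγ, rfl⟩
      exact holder_lower ν hνpos lam hlam γ (fun k => (hγ.1 k).1) hγ.2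
    refine le_antisymm ?_ (le_csInf hne ?_)
    · -- sInf ≤ S^(ν+1)
      by_cases hS : S = 0
      · have hlam0 : ∀ k, lam k = 0 := by
          intro k
          have hk0 : s k = 0 :=
            (Finset.sum_eq_zero_iff_of_nonneg (fun j _ => hsnn j)).1 hS k (Finset.mem_univ k)
          by_contra hcc
          have hkpos : 0 < lam k := (hlam k).lt_of_ne' hcc
          exact absurd hk0 (Real.rpow_pos_of_pos hkpos _).ne'
        have hmem : (0:ℝ) ∈ {r : ℝ | ∃ γ ∈ relintSimplex K, r = ∑ k, lam k * (γ k) ^ (-ν)} :=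
          ⟨_, hγ0, by simp [hlam0]⟩
        have : sInf {r : ℝ | ∃ γ ∈ relintSimplex K, r = ∑ k, lam k * (γ k) ^ (-ν)} ≤ 0 :=
          csInf_le hbdd hmem
        rw [hS, Real.zero_rpow hν1.ne']
        exact this
      · have hSpos : 0 < S := lt_of_le_of_ne hSnn (Ne.symm hS)
        by_contra hc
        push_neg at hc
        have hcont : Tendsto (fun t : ℝ => ∑ k, lam k * ((s k + t)/(S + K*t)) ^ (-ν))
            (𝓝[>] (0:ℝ)) (𝓝 (∑ k, lam k * ((s k + 0)/(S + K*0)) ^ (-ν))) := by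
          apply tendsto_finset_sum
          intro k _
          by_cases hk : lam k = 0
          · simp only [hk, zero_mul]
            exact tendsto_const_nhds
          · have hklam : 0 < lam k := (hlam k).lt_of_ne' hk
            have hsk : 0 < s k := Real.rpow_pos_of_pos hklam _
            apply Tendsto.const_mul
            have hbase : Tendsto (fun t : ℝ => (s k + t)/(S + K*t)) (𝓝[>] (0:ℝ))
                (𝓝 ((s k + 0)/(S + K*0))) := by
              apply Tendsto.mono_left _ nhdsWithin_le_nhds
              apply Tendsto.div
              · exact (continuous_const.add continuous_id).tendsto 0
              · exact (continuous_const.add (continuous_const.mul continuous_id)).tendsto 0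
              · simpa using hSpos.ne'
            have hx : (s k + 0)/(S + K*0) ≠ 0 := by
              rw [add_zero, mul_zero, add_zero]
              exact (div_pos hsk hSpos).ne'
            exact ((Real.continuousAt_rpow_const _ _ (Or.inl hx)).tendsto).comp hbase
        have hval : ∑ k, lam k * ((s k + 0)/(S + K*0)) ^ (-ν) = S ^ (ν+1) := by
          have hterm : ∀ k ∈ Finset.univ, lam k * ((s k + 0)/(S + K*0)) ^ (-ν) = s k * S ^ ν := by
            intro k _
            rw [add_zero, mul_zero, add_zero]
            by_cases hk : lam k = 0
            · have hsk0 : s k = 0 := by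
                rw [hsdef]; simp only [hk]; exact Real.zero_rpow (one_div_ne_zero hν1.ne')
              simp [hk, hsk0]
            · have hklam : 0 < lam k := (hlam k).lt_of_ne' hk
              have hsk : 0 < s k := Real.rpow_pos_of_pos hklam _
              have hlameq : lam k = s k ^ (ν+1) := by
                rw [hsdef]
                simp only
                rw [← Real.rpow_mul (hlam k), one_div_mul_cancel hν1.ne', Real.rpow_one]
              rw [Real.div_rpow hsk.le hSpos.le, hlameq, Real.rpow_neg hSpos.le,
                div_eq_mul_inv, inv_inv, ← mul_assoc, ← Real.rpow_add hsk,
                show ν + 1 + -ν = (1:ℝ) by ring, Real.rpow_one]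
          rw [Finset.sum_congr rfl hterm, ← Finset.sum_mul, ← hSdef,
            Real.rpow_add hSpos, Real.rpow_one, mul_comm]
        rw [hval] at hcont
        have hev : ∀ᶠ t in 𝓝[>] (0:ℝ),
            (∑ k, lam k * ((s k + t)/(S + K*t)) ^ (-ν)) <
              sInf {r : ℝ | ∃ γ ∈ relintSimplex K, r = ∑ k, lam k * (γ k) ^ (-ν)} :=
          hcont.eventually_lt_const hc
        obtain ⟨t, htlt, htpos⟩ := (hev.and self_mem_nhdsWithin).exists
        have hmem : (∑ k, lam k * ((s k + t)/(S + K*t)) ^ (-ν)) ∈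
            {r : ℝ | ∃ γ ∈ relintSimplex K, r = ∑ k, lam k * (γ k) ^ (-ν)} :=
          ⟨_, mem_relint_of hK s hsnn htpos, rfl⟩
        exact absurd (csInf_le hbdd hmem) (not_le.2 htlt)
    · rintro r ⟨γ, hγ, rfl⟩
      exact holder_lower ν hνpos lam hlam γ (fun k => (hγ.1 k).1) hγ.2
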